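/- For fixed Y₀ > 0, the function T ↦ ∫₀^{ℏω_D} tanh(√(ξ²+Y₀)/(2k_B T))/√(ξ²+Y₀) dξ, extended by T = 0 value ∫₀^{ℏω_D} dξ/√(ξ²+Y₀), is continuous at T = 0 and has right derivative 0 there; moreover |F(T,Y₀) − F(0,Y₀)|/T ≤ (4k_B²T/Y₀)∫₀^{ℏω_D} dξ/√(ξ²+Y₀) for T > 0. -/

import Mathlib

lemma continuous_tanh' : Continuous Real.tanh := by
  have h : Real.tanh = fun x => Real.sinh x / Real.cosh x :=
    funext fun x => Real.tanh_eq_sinh_div_cosh x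
  rw [h]
  exact Real.continuous_sinh.div Real.continuous_cosh fun x => (Real.cosh_pos x).ne'

lemma tanh_sandwich (x : ℝ) (hx : 0 < x) :
    0 ≤ 1 - Real.tanh x ∧ 1 - Real.tanh x ≤ 1 / x ^ 2 := by
  have hep : 0 < Real.exp x := Real.exp_pos x
  have hmep : 0 < Real.exp (-x) := Real.exp_pos _
  have h1 : Real.tanh x = (Real.exp x - Real.exp (-x)) / (Real.exp x + Real.exp (-x)) := by
    rw [Real.tanh_eq_sinh_div_cosh, Real.sinh_eq, Real.cosh_eq]
    field_simp
  have hd : 0 < Real.exp x + Real.exp (-x) := by positivity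
  have h2 : 1 - Real.tanh x = 2 * Real.exp (-x) / (Real.exp x + Real.exp (-x)) := by
    rw [h1]; field_simp; ring
  constructor
  · rw [h2]; positivity
  · have hq : 1 + 2*x + (2*x)^2/2 ≤ Real.exp (2*x) :=
      Real.quadratic_le_exp_of_nonneg (by linarith)
    have he : Real.exp (2*x) = Real.exp x * Real.exp x := by
      rw [← Real.exp_add]; ring_nf
    have hme : Real.exp (-x) * Real.exp x = 1 := by
      rw [← Real.exp_add]; simp
    rw [h2, div_le_div_iff₀ hd (by positivity)]
    nlinarith [sq_nonneg x, mul_pos hmep (mul_pos hep hep)]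

theorem F_continuous_right_deriv_zero_at_T0 (kB ω Y₀ : ℝ)
    (hkB : 0 < kB) (hω : 0 < ω) (hY₀ : 0 < Y₀)
    (F : ℝ → ℝ)
    (hFpos : ∀ T : ℝ, 0 < T → F T = ∫ ξ in (0:ℝ)..ω,
      Real.tanh (Real.sqrt (ξ^2 + Y₀) / (2 * kB * T)) / Real.sqrt (ξ^2 + Y₀))
    (hF0 : F 0 = ∫ ξ in (0:ℝ)..ω, 1 / Real.sqrt (ξ^2 + Y₀)) :
    ContinuousWithinAt F (Set.Ici 0) 0 ∧
    HasDerivWithinAt F 0 (Set.Ici 0) 0 ∧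
    ∀ T : ℝ, 0 < T →
      |F T - F 0| / T ≤ (4 * kB^2 * T / Y₀) * ∫ ξ in (0:ℝ)..ω, 1 / Real.sqrt (ξ^2 + Y₀) := by
  set I : ℝ := ∫ ξ in (0:ℝ)..ω, 1 / Real.sqrt (ξ^2 + Y₀) with hI
  have hspos : ∀ ξ : ℝ, 0 < Real.sqrt (ξ^2 + Y₀) := fun ξ =>
    Real.sqrt_pos.2 (by positivity)
  have hcontS : Continuous fun ξ : ℝ => Real.sqrt (ξ^2 + Y₀) :=
    Real.continuous_sqrt.comp (by continuity)
  have hg : Continuous fun ξ : ℝ => 1 / Real.sqrt (ξ^2 + Y₀) :=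
    continuous_const.div hcontS (fun ξ => (hspos ξ).ne')
  have hgint : IntervalIntegrable (fun ξ : ℝ => 1 / Real.sqrt (ξ^2 + Y₀))
      MeasureTheory.volume 0 ω := hg.intervalIntegrable 0 ω
  have hInn : 0 ≤ I := by
    rw [hI]
    apply intervalIntegral.integral_nonneg hω.le
    intro ξ _; positivity
  -- core bound
  have key : ∀ T : ℝ, 0 < T → |F T - F 0| ≤ (4 * kB^2 * T^2 / Y₀) * I := by
    intro T hT
    have hh : Continuous fun ξ : ℝ =>
        Real.tanh (Real.sqrt (ξ^2 + Y₀) / (2 * kB * T)) / Real.sqrt (ξ^2 + Y₀) :=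
      (continuous_tanh'.comp (hcontS.div_const _)).div hcontS (fun ξ => (hspos ξ).ne')
    have hhint := hh.intervalIntegrable (μ := MeasureTheory.volume) 0 ω
    have hdiff : F T - F 0 = ∫ ξ in (0:ℝ)..ω,
        (Real.tanh (Real.sqrt (ξ^2 + Y₀) / (2 * kB * T)) / Real.sqrt (ξ^2 + Y₀)
          - 1 / Real.sqrt (ξ^2 + Y₀)) := by
      rw [hFpos T hT, hF0, intervalIntegral.integral_sub hhint hgint]
    rw [hdiff]
    calc |∫ ξ in (0:ℝ)..ω,
        (Real.tanh (Real.sqrt (ξ^2 + Y₀) / (2 * kB * T)) / Real.sqrt (ξ^2 + Y₀)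
          - 1 / Real.sqrt (ξ^2 + Y₀))|
        ≤ ∫ ξ in (0:ℝ)..ω,
          |Real.tanh (Real.sqrt (ξ^2 + Y₀) / (2 * kB * T)) / Real.sqrt (ξ^2 + Y₀)
            - 1 / Real.sqrt (ξ^2 + Y₀)| :=
          intervalIntegral.abs_integral_le_integral_abs hω.le
      _ ≤ ∫ ξ in (0:ℝ)..ω, (4 * kB^2 * T^2 / Y₀) * (1 / Real.sqrt (ξ^2 + Y₀)) := by
          apply intervalIntegral.integral_mono_on hω.le (hhint.sub hgint).abs
            (hgint.const_mul _)
          intro ξ _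
          set s := Real.sqrt (ξ^2 + Y₀) with hs
          have hs0 : 0 < s := hspos ξ
          have hs2 : s^2 = ξ^2 + Y₀ := Real.sq_sqrt (by positivity)
          set x := s / (2 * kB * T) with hxdef
          have hx0 : 0 < x := by positivity
          obtain ⟨ht1, ht2⟩ := tanh_sandwich x hx0
          have habs : |Real.tanh x / s - 1 / s| = (1 - Real.tanh x) / s := by
            rw [abs_of_nonpos (by
              have : (1 - Real.tanh x) / s ≥ 0 := div_nonneg ht1 hs0.le
              linarith [this, (by ring : Real.tanh x / s - 1/s = -((1 - Real.tanh x)/s))])]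
            ring
          rw [habs]
          have hx2 : 1 / x ^ 2 = 4 * kB^2 * T^2 / s^2 := by
            rw [hxdef]; field_simp; ring
          have hstep : (1 - Real.tanh x) / s ≤ (4 * kB^2 * T^2 / s^2) / s := by
            gcongr
            rw [← hx2]; exact ht2
          refine hstep.trans ?_
          rw [hs2, mul_one_div, div_div, div_div]
          gcongr
          nlinarith [sq_nonneg ξ, hs0]
      _ = (4 * kB^2 * T^2 / Y₀) * I := by
          rw [hI, ← intervalIntegral.integral_const_mul]
  -- third claim
  have third : ∀ T : ℝ, 0 < T → |F T - F 0| / T ≤ (4 * kB^2 * T / Y₀) * I := by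
    intro T hT
    rw [div_le_iff₀ hT]
    calc |F T - F 0| ≤ (4 * kB^2 * T^2 / Y₀) * I := key T hT
      _ = (4 * kB^2 * T / Y₀) * I * T := by ring
  -- derivative
  have hderiv : HasDerivWithinAt F 0 (Set.Ici 0) 0 := by
    rw [hasDerivWithinAt_iff_tendsto_slope]
    apply squeeze_zero_norm' (a := fun T : ℝ => (4 * kB^2 * T / Y₀) * I)
    · filter_upwards [self_mem_nhdsWithin] with T hT
      obtain ⟨hTmem, hTne⟩ := hT
      have hT : 0 < T := lt_of_le_of_ne hTmem (Ne.symm hTne)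
      have hslope : slope F 0 T = (F T - F 0) / T := by
        rw [slope_def_field, sub_zero]
      rw [hslope, Real.norm_eq_abs, abs_div, abs_of_pos hT]
      exact third T hT
    · have hc : Continuous fun T : ℝ => (4 * kB^2 * T / Y₀) * I := by fun_prop
      have h0 := hc.tendsto 0
      simp only [mul_zero, zero_div, zero_mul] at h0
      exact h0.mono_left nhdsWithin_le_nhds
  exact ⟨hderiv.continuousWithinAt, hderiv, third⟩
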